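/- arXiv:2210.11215 — 2 statements merged into one kernel-verified Lean document; each statement's English description precedes it below -/
import Mathlib

section
/- Let x̃_j denote the j-th column of the tail part X̃_n = X_n − X̂_n (entries X̃_ij = X_ij 1{|X_ij| > (pn)^{1/4}/‖b_i‖} − E[X_ij 1{|X_ij| > (pn)^{1/4}/‖b_i‖}]) and x̄̃ = (1/n)Σ_{j=1}^n x̃_j. Then E‖B x̄̃‖² = O(p^{1/2}/n^{3/2}) as (p,n) → ∞. -/
open Matrix MeasureTheory ProbabilityTheory Filter

/-- Tail part of the truncation: with `X̃_ij = X_ij 1{|X_ij| > (pn)^{1/4}/‖b_i‖}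
− E[X_ij 1{|X_ij| > (pn)^{1/4}/‖b_i‖}]` and `x̄̃ = (1/n) ∑_j x̃_j`, one has
`E ‖B x̄̃‖² = O(p^{1/2}/n^{3/2})` as `(p, n) → ∞`. -/
theorem tail_part_sample_mean_bound
    {Ω : Type*} [MeasurableSpace Ω] (μ : Measure Ω) [IsProbabilityMeasure μ]
    (ξ : Ω → ℝ) (hmeas : Measurable ξ)
    (h0 : (∫ ω, ξ ω ∂μ) = 0) (h1 : (∫ ω, (ξ ω) ^ 2 ∂μ) = 1)
    (h4 : Integrable (fun ω => (ξ ω) ^ 4) μ)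
    (p m : ℕ → ℕ) (hp : Tendsto p atTop atTop)
    (B : ∀ n, Matrix (Fin (p n)) (Fin (m n)) ℝ)
    (hB : ∀ n, B n * (B n)ᵀ = 1)
    (X : ∀ n, Fin (m n) × Fin n → Ω → ℝ)
    (hXmeas : ∀ n ij, Measurable (X n ij))
    (hXindep : ∀ n, iIndepFun (X n) μ)
    (hXident : ∀ n ij, IdentDistrib (X n ij) ξ μ μ)
    -- the centered tail parts `X̃_ij`
    (Xtail : ∀ n, Fin (m n) × Fin n → Ω → ℝ)
    (hXtail : ∀ n ij ω, Xtail n ij ω =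
      Set.indicator {ω' | ((p n * n : ℝ)) ^ ((1 : ℝ) / 4) <
          Real.sqrt (∑ l, (B n l ij.1) ^ 2) * |X n ij ω'|} (X n ij) ω
        - ∫ ω', Set.indicator {ω'' | ((p n * n : ℝ)) ^ ((1 : ℝ) / 4) <
            Real.sqrt (∑ l, (B n l ij.1) ^ 2) * |X n ij ω''|} (X n ij) ω' ∂μ) :
    (fun n => ∫ ω, ∑ i, ((B n).mulVec
        (fun l => (n : ℝ)⁻¹ * ∑ j : Fin n, Xtail n (l, j) ω) i) ^ 2 ∂μ)
      =O[atTop] (fun n => Real.sqrt (p n) / (n : ℝ) ^ ((3 : ℝ) / 2)) := by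
  classical
  have hξ2 : Integrable (fun ω => (ξ ω) ^ 2) μ := by
    refine (h4.add (integrable_const 1)).mono'
      ((hmeas.pow_const 2).aestronglyMeasurable) (Eventually.of_forall fun ω => ?_)
    rw [Real.norm_eq_abs, abs_of_nonneg (sq_nonneg _)]
    simp only [Pi.add_apply]
    nlinarith [sq_nonneg ((ξ ω) ^ 2 - 1)]
  set C := ∫ ω, (ξ ω) ^ 4 ∂μ with hCdef
  have hC0 : 0 ≤ C := integral_nonneg fun ω => by positivity
  rw [Asymptotics.isBigO_iff]
  refine ⟨C, ?_⟩
  filter_upwards [eventually_ge_atTop 1, hp.eventually_ge_atTop 1] with n hn hpn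
  have hn0 : (0 : ℝ) < n := by exact_mod_cast hn
  have hn1 : (1 : ℝ) ≤ n := by exact_mod_cast hn
  have hP0 : (0 : ℝ) < p n := by exact_mod_cast hpn
  have hP1 : (1 : ℝ) ≤ p n := by exact_mod_cast hpn
  set q : ℝ := (p n : ℝ) * (n : ℝ) with hq
  have hq1 : (1 : ℝ) ≤ q := by rw [hq]; nlinarith
  have hq0 : (0 : ℝ) < q := by linarith
  set c : ℝ := q ^ ((1 : ℝ) / 4) with hc
  have hc0 : 0 < c := Real.rpow_pos_of_pos hq0 _
  have hc2 : c ^ 2 = Real.sqrt q := by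
    rw [hc, ← Real.rpow_natCast (q ^ ((1 : ℝ) / 4)) 2, ← Real.rpow_mul hq0.le,
      Real.sqrt_eq_rpow]
    norm_num
  have hsq0 : 0 < Real.sqrt q := Real.sqrt_pos.mpr hq0
  set a : Fin (m n) → ℝ := fun l => Real.sqrt (∑ i, (B n i l) ^ 2) with ha
  have ha0 : ∀ l, 0 ≤ a l := fun l => Real.sqrt_nonneg _
  have ha2 : ∀ l, (a l) ^ 2 = ∑ i, (B n i l) ^ 2 := fun l =>
    Real.sq_sqrt (by positivity)
  set g : Fin (m n) → ℝ → ℝ := fun l x => if c < a l * |x| then x else 0 with hg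
  have hgmeas : ∀ l, Measurable (g l) := by
    intro l
    exact Measurable.ite
      (measurableSet_lt measurable_const (measurable_const.mul measurable_abs))
      measurable_id measurable_const
  -- pointwise bound for the truncated square
  have hgsq : ∀ l x, (g l x) ^ 2 ≤ (a l) ^ 2 / Real.sqrt q * x ^ 4 := by
    intro l x
    simp only [hg]
    split_ifs with h
    · have h1 : c ^ 2 < (a l) ^ 2 * x ^ 2 := by
        calc c ^ 2 < (a l * |x|) ^ 2 := by nlinarith [h, hc0]
          _ = (a l) ^ 2 * x ^ 2 := by rw [mul_pow, sq_abs]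
      rw [← hc2, div_mul_eq_mul_div, le_div_iff₀ (by positivity)]
      nlinarith [mul_le_mul_of_nonneg_left h1.le (sq_nonneg x)]
    · have h0' : ((0 : ℝ)) ^ 2 = 0 := by norm_num
      rw [h0']
      positivity
  -- the truncated variables
  set W : Fin (m n) × Fin n → Ω → ℝ := fun k ω => g k.1 (X n k ω) with hW
  have hWmeas : ∀ k, Measurable (W k) := fun k => (hgmeas k.1).comp (hXmeas n k)
  have hWid : ∀ k, IdentDistrib (W k) (fun ω => g k.1 (ξ ω)) μ μ := fun k =>
    (hXident n k).comp (hgmeas k.1)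
  have hgξ2 : ∀ l, Integrable (fun ω => (g l (ξ ω)) ^ 2) μ := by
    intro l
    refine hξ2.mono' ((((hgmeas l).comp hmeas).pow_const 2).aestronglyMeasurable)
      (Eventually.of_forall fun ω => ?_)
    rw [Real.norm_eq_abs, abs_of_nonneg (sq_nonneg _)]
    simp only [hg]
    split_ifs with h
    · exact le_refl _
    · simpa using sq_nonneg (ξ ω)
  have hW2 : ∀ k, Integrable (fun ω => (W k ω) ^ 2) μ := fun k =>
    ((hWid k).comp (measurable_id.pow_const 2)).integrable_iff.mpr (hgξ2 k.1)
  have hWmem : ∀ k, MemLp (W k) 2 μ := fun k =>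
    (memLp_two_iff_integrable_sq (hWmeas k).aestronglyMeasurable).mpr (hW2 k)
  have hWint : ∀ k, Integrable (W k) μ := fun k => (hWmem k).integrable one_le_two
  set mc : Fin (m n) × Fin n → ℝ := fun k => ∫ ω, W k ω ∂μ with hmc
  set Y : Fin (m n) × Fin n → Ω → ℝ := fun k => Xtail n k with hY
  have hindic : ∀ (k : Fin (m n) × Fin n) (ω : Ω),
      Set.indicator {ω' | ((p n : ℝ) * (n : ℝ)) ^ ((1 : ℝ) / 4) <
        Real.sqrt (∑ l, (B n l k.1) ^ 2) * |X n k ω'|} (X n k) ω = W k ω := by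
    intro k ω
    rw [Set.indicator_apply]
    simp only [Set.mem_setOf_eq, hW, hg, hc, hq, ha]
  have hYdef : ∀ k ω, Y k ω = W k ω - mc k := by
    intro k ω
    simp only [hY]
    rw [hXtail n k ω]
    simp only [hindic, hmc]
  have hYmem : ∀ k, MemLp (Y k) 2 μ := by
    intro k
    have : Y k = fun ω => W k ω - mc k := funext (hYdef k)
    rw [this]
    exact (hWmem k).sub (memLp_const _)
  have hYint : ∀ k, Integrable (Y k) μ := fun k => (hYmem k).integrable one_le_two
  have hYmean : ∀ k, ∫ ω, Y k ω ∂μ = 0 := by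
    intro k
    have heq : ∫ ω, Y k ω ∂μ = ∫ ω, (W k ω - mc k) ∂μ :=
      integral_congr_ae (Eventually.of_forall fun ω => hYdef k ω)
    rw [heq, integral_sub (hWint k) (integrable_const _), integral_const, probReal_univ]
    simp [hmc]
  have hYindep : iIndepFun Y μ := by
    have h := (hXindep n).comp (fun k x => g k.1 x - mc k)
      (fun k => (hgmeas k.1).sub measurable_const)
    have hYeq : Y = fun k => (fun x => g k.1 x - mc k) ∘ X n k :=
      funext fun k => funext fun ω => hYdef k ω
    rw [hYeq]
    exact h
  have hYvar : ∀ k, variance (Y k) μ ≤ (a k.1) ^ 2 / Real.sqrt q * C := by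
    intro k
    have hYsq : (fun ω => (Y k ω) ^ 2)
        = fun ω => (W k ω) ^ 2 - 2 * mc k * W k ω + (mc k) ^ 2 :=
      funext fun ω => by rw [hYdef k ω]; ring
    have h1 : variance (Y k) μ = ∫ ω, (Y k ω) ^ 2 ∂μ := by
      rw [variance_eq_sub (hYmem k), hYmean k]
      simp
    have e1 : ∫ ω, (Y k ω) ^ 2 ∂μ = ∫ ω, (W k ω) ^ 2 ∂μ - (mc k) ^ 2 := by
      have i1 : Integrable (fun ω => (W k ω) ^ 2 - 2 * mc k * W k ω) μ :=
        (hW2 k).sub ((hWint k).const_mul (2 * mc k))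
      rw [hYsq, integral_add i1 (integrable_const ((mc k) ^ 2)),
        integral_sub (hW2 k) ((hWint k).const_mul (2 * mc k)), integral_const_mul,
        integral_const, probReal_univ]
      simp only [hmc, ENNReal.toReal_one, smul_eq_mul, one_mul]
      ring
    have e2 : ∫ ω, (W k ω) ^ 2 ∂μ = ∫ ω, (g k.1 (ξ ω)) ^ 2 ∂μ :=
      ((hWid k).comp (measurable_id.pow_const 2)).integral_eq
    have e3 : ∫ ω, (g k.1 (ξ ω)) ^ 2 ∂μ ≤ (a k.1) ^ 2 / Real.sqrt q * C :=
      calc ∫ ω, (g k.1 (ξ ω)) ^ 2 ∂μ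
          ≤ ∫ ω, (a k.1) ^ 2 / Real.sqrt q * (ξ ω) ^ 4 ∂μ :=
            integral_mono (hgξ2 k.1) (h4.const_mul _) (fun ω => hgsq k.1 (ξ ω))
        _ = (a k.1) ^ 2 / Real.sqrt q * C := by rw [integral_const_mul]
    calc variance (Y k) μ = ∫ ω, (W k ω) ^ 2 ∂μ - (mc k) ^ 2 := by rw [h1, e1]
      _ ≤ ∫ ω, (W k ω) ^ 2 ∂μ := by nlinarith [sq_nonneg (mc k)]
      _ = ∫ ω, (g k.1 (ξ ω)) ^ 2 ∂μ := e2
      _ ≤ _ := e3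
  -- the row sums
  set S : Fin (p n) → Ω → ℝ :=
    fun i ω => ∑ k : Fin (m n) × Fin n, B n i k.1 * Y k ω with hS
  have hZmem : ∀ i k, MemLp (fun ω => B n i k.1 * Y k ω) 2 μ :=
    fun i k => (hYmem k).const_mul _
  have hSmem : ∀ i, MemLp (S i) 2 μ := by
    intro i
    have : S i = fun ω => ∑ k : Fin (m n) × Fin n, B n i k.1 * Y k ω := by
      simp only [hS]
    rw [this]
    exact memLp_finset_sum _ (fun k _ => hZmem i k)
  have hSmean : ∀ i, ∫ ω, S i ω ∂μ = 0 := by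
    intro i
    simp only [hS]
    rw [integral_finset_sum _ (fun k _ => (hYint k).const_mul _)]
    simp only [integral_const_mul]
    simp [hYmean]
  have hSvar : ∀ i, variance (S i) μ
      = ∑ k : Fin (m n) × Fin n, (B n i k.1) ^ 2 * variance (Y k) μ := by
    intro i
    have hZindep := hYindep.comp (fun k x => B n i k.1 * x)
      (fun k => measurable_const_mul _)
    have hvs := IndepFun.variance_sum (μ := μ)
      (X := fun k (ω : Ω) => B n i k.1 * Y k ω) (s := Finset.univ)
      (fun k _ => hZmem i k)
      (fun k _ l _ hkl => hZindep.indepFun hkl)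
    calc variance (S i) μ
        = variance (∑ k : Fin (m n) × Fin n, fun ω => B n i k.1 * Y k ω) μ := by
          congr 1
          funext ω
          simp [hS]
      _ = ∑ k : Fin (m n) × Fin n, variance (fun ω => B n i k.1 * Y k ω) μ := hvs
      _ = ∑ k : Fin (m n) × Fin n, (B n i k.1) ^ 2 * variance (Y k) μ :=
          Finset.sum_congr rfl fun k _ => variance_const_mul _ _ _
  have hSint : ∀ i, ∫ ω, (S i ω) ^ 2 ∂μ = variance (S i) μ := by
    intro i
    rw [variance_eq_sub (hSmem i), hSmean i]
    simp
  -- matrix facts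
  have hB1 : ∀ l, ∑ i, (B n i l) ^ 2 ≤ 1 := by
    intro l
    have hQdiag : ((B n)ᵀ * B n) l l = ∑ i, (B n i l) ^ 2 := by
      simp [Matrix.mul_apply, Matrix.transpose_apply, pow_two]
    have hQ : ((B n)ᵀ * B n) * ((B n)ᵀ * B n) = (B n)ᵀ * B n := by
      rw [Matrix.mul_assoc, ← Matrix.mul_assoc (B n), hB n, Matrix.one_mul]
    have he := congrFun (congrFun hQ l) l
    rw [Matrix.mul_apply] at he
    have hsymm : ∀ k, ((B n)ᵀ * B n) k l = ((B n)ᵀ * B n) l k := by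
      intro k
      simp [Matrix.mul_apply, Matrix.transpose_apply, mul_comm]
    have he2 : ∑ k, (((B n)ᵀ * B n) l k) ^ 2 = ∑ i, (B n i l) ^ 2 := by
      rw [← hQdiag, ← he]
      exact Finset.sum_congr rfl fun k _ => by rw [hsymm k]; ring
    have hd0 : (0 : ℝ) ≤ ∑ i, (B n i l) ^ 2 := by positivity
    have h2 : (∑ i, (B n i l) ^ 2) ^ 2 ≤ ∑ i, (B n i l) ^ 2 := by
      calc (∑ i, (B n i l) ^ 2) ^ 2 = (((B n)ᵀ * B n) l l) ^ 2 := by rw [hQdiag]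
        _ ≤ ∑ k, (((B n)ᵀ * B n) l k) ^ 2 :=
            Finset.single_le_sum (f := fun k => (((B n)ᵀ * B n) l k) ^ 2)
              (fun k _ => sq_nonneg _) (Finset.mem_univ l)
        _ = ∑ i, (B n i l) ^ 2 := he2
    rcases eq_or_lt_of_le hd0 with h0' | h0'
    · rw [← h0']; norm_num
    · have h3 : (∑ i, (B n i l) ^ 2) * (∑ i, (B n i l) ^ 2)
          ≤ (∑ i, (B n i l) ^ 2) * 1 := by
        rw [mul_one, ← pow_two]; exact h2
      exact le_of_mul_le_mul_left h3 h0'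
  have hBtr : ∑ l, ∑ i, (B n i l) ^ 2 = (p n : ℝ) := by
    rw [Finset.sum_comm]
    have hrow : ∀ i, ∑ l, (B n i l) ^ 2 = 1 := by
      intro i
      have := congrFun (congrFun (hB n) i) i
      simpa [Matrix.mul_apply, Matrix.transpose_apply, Matrix.one_apply,
        pow_two] using this
    simp [hrow]
  -- rewriting the integrand
  have hmv : ∀ (ω : Ω) (i : Fin (p n)),
      (B n).mulVec (fun l => (n : ℝ)⁻¹ * ∑ j : Fin n, Xtail n (l, j) ω) i
        = (n : ℝ)⁻¹ * S i ω := by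
    intro ω i
    simp only [Matrix.mulVec, dotProduct, hS, hY, Fintype.sum_prod_type,
      Finset.mul_sum]
    refine Finset.sum_congr rfl fun l _ => Finset.sum_congr rfl fun j _ => by ring
  have hInt : ∀ i, Integrable (fun ω => ((n : ℝ)⁻¹ * S i ω) ^ 2) μ :=
    fun i => ((hSmem i).const_mul _).integrable_sq
  have key : ∫ ω, ∑ i, ((B n).mulVec
        (fun l => (n : ℝ)⁻¹ * ∑ j : Fin n, Xtail n (l, j) ω) i) ^ 2 ∂μ
      = ((n : ℝ)⁻¹) ^ 2 * ∑ i, variance (S i) μ := by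
    simp only [hmv]
    rw [integral_finset_sum _ (fun i _ => hInt i), Finset.mul_sum]
    refine Finset.sum_congr rfl fun i _ => ?_
    have : (fun ω => ((n : ℝ)⁻¹ * S i ω) ^ 2)
        = fun ω => ((n : ℝ)⁻¹) ^ 2 * (S i ω) ^ 2 := funext fun ω => by ring
    rw [this, integral_const_mul, hSint i]
  -- summing the variance bounds
  have hvarsum : ∑ i, variance (S i) μ ≤ C / Real.sqrt q * ((n : ℝ) * (p n : ℝ)) := by
    calc ∑ i, variance (S i) μ
        = ∑ i, ∑ k : Fin (m n) × Fin n, (B n i k.1) ^ 2 * variance (Y k) μ :=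
          Finset.sum_congr rfl fun i _ => hSvar i
      _ = ∑ k : Fin (m n) × Fin n, (∑ i, (B n i k.1) ^ 2) * variance (Y k) μ := by
          rw [Finset.sum_comm]
          exact Finset.sum_congr rfl fun k _ => (Finset.sum_mul _ _ _).symm
      _ ≤ ∑ k : Fin (m n) × Fin n, (∑ i, (B n i k.1) ^ 2) * (C / Real.sqrt q) := by
          refine Finset.sum_le_sum fun k _ => ?_
          have hd0 : (0 : ℝ) ≤ ∑ i, (B n i k.1) ^ 2 := by positivity
          have hd1 : (a k.1) ^ 2 ≤ 1 := by rw [ha2]; exact hB1 k.1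
          have h2 : variance (Y k) μ ≤ C / Real.sqrt q := by
            calc variance (Y k) μ ≤ (a k.1) ^ 2 / Real.sqrt q * C := hYvar k
              _ ≤ 1 / Real.sqrt q * C := by
                  have hdiv : (a k.1) ^ 2 / Real.sqrt q ≤ 1 / Real.sqrt q := by
                    gcongr
                  exact mul_le_mul_of_nonneg_right hdiv hC0
              _ = C / Real.sqrt q := by ring
          exact mul_le_mul_of_nonneg_left h2 hd0
      _ = C / Real.sqrt q * ((n : ℝ) * (p n : ℝ)) := by
          rw [← Finset.sum_mul, Fintype.sum_prod_type]
          simp only [Finset.sum_const, Finset.card_univ, Fintype.card_fin,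
            nsmul_eq_mul]
          rw [← Finset.mul_sum, hBtr]
          ring
  -- final computation
  have hLHSnn : (0 : ℝ) ≤ ∫ ω, ∑ i, ((B n).mulVec
      (fun l => (n : ℝ)⁻¹ * ∑ j : Fin n, Xtail n (l, j) ω) i) ^ 2 ∂μ :=
    integral_nonneg fun ω => Finset.sum_nonneg fun i _ => sq_nonneg _
  have hsp : (0 : ℝ) < Real.sqrt (p n) := Real.sqrt_pos.mpr hP0
  have hsn : (0 : ℝ) < Real.sqrt n := Real.sqrt_pos.mpr hn0
  have hn32 : ((n : ℝ)) ^ ((3 : ℝ) / 2) = (n : ℝ) * Real.sqrt n := by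
    rw [show (3 : ℝ) / 2 = (1 : ℝ) + 1 / 2 by norm_num, Real.rpow_add hn0,
      Real.rpow_one, ← Real.sqrt_eq_rpow]
  have hfin : (p n : ℝ) / ((n : ℝ) * Real.sqrt q)
      = Real.sqrt (p n) / (n : ℝ) ^ ((3 : ℝ) / 2) := by
    rw [hq, Real.sqrt_mul (by positivity), hn32]
    rw [div_eq_div_iff (by positivity) (by positivity)]
    have hps : Real.sqrt (p n) * Real.sqrt (p n) = (p n : ℝ) :=
      Real.mul_self_sqrt hP0.le
    rw [show Real.sqrt (p n) * ((n : ℝ) * (Real.sqrt (p n) * Real.sqrt n))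
        = (Real.sqrt (p n) * Real.sqrt (p n)) * ((n : ℝ) * Real.sqrt n) from by ring,
      hps]
  rw [Real.norm_eq_abs, Real.norm_eq_abs, abs_of_nonneg hLHSnn,
    abs_of_nonneg (by positivity), key]
  calc ((n : ℝ)⁻¹) ^ 2 * ∑ i, variance (S i) μ
      ≤ ((n : ℝ)⁻¹) ^ 2 * (C / Real.sqrt q * ((n : ℝ) * (p n : ℝ))) :=
        mul_le_mul_of_nonneg_left hvarsum (by positivity)
    _ = C * ((p n : ℝ) / ((n : ℝ) * Real.sqrt q)) := by
        have hnn : ((n : ℝ))⁻¹ * (n : ℝ) = 1 := inv_mul_cancel₀ (ne_of_gt hn0)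
        rw [div_eq_mul_inv, div_eq_mul_inv, mul_inv]
        linear_combination (C * (p n : ℝ) * (Real.sqrt q)⁻¹ * ((n : ℝ))⁻¹) * hnn
    _ = C * (Real.sqrt (p n) / (n : ℝ) ^ ((3 : ℝ) / 2)) := by rw [hfin]
end

section
/- Under assumptions (A.1)–(A.3), ‖Bx̄‖² − c_n = O_P(√p / n) as (p,n) → ∞; that is, the sequence (n/√p)(‖Bx̄‖² − c_n) is tight. -/
set_option linter.unusedSectionVars false

open Matrix MeasureTheory ProbabilityTheory Filter



section AuxTight
variable {Ω : Type*} [MeasurableSpace Ω] {μ : Measure Ω} [IsProbabilityMeasure μ]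
variable {ξ : Ω → ℝ}

lemma auxT_xi_int (hmeas : Measurable ξ) (h4 : Integrable (fun ω => (ξ ω) ^ 4) μ) :
    ∀ k ≤ 4, Integrable (fun ω => ξ ω ^ k) μ := by
  intro k hk
  have hb : ∀ ω, ‖ξ ω ^ k‖ ≤ 1 + ξ ω ^ 4 := by
    intro ω
    rw [Real.norm_eq_abs, abs_pow]
    rcases le_or_gt (|ξ ω|) 1 with h | h
    · have h2 : |ξ ω| ^ k ≤ 1 := pow_le_one₀ (abs_nonneg _) h
      nlinarith [sq_nonneg (ξ ω ^ 2)]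
    · have h2 : |ξ ω| ^ k ≤ |ξ ω| ^ 4 := pow_le_pow_right₀ h.le hk
      have h3 : |ξ ω| ^ 4 = ξ ω ^ 4 := by
        rw [← abs_pow, abs_of_nonneg (by positivity)]
      nlinarith
  exact (Integrable.add (integrable_const 1) h4).mono'
    (hmeas.pow_const k).aestronglyMeasurable (Filter.Eventually.of_forall hb)

lemma auxT_prod {I : Type*} [DecidableEq I] (Y : I → Ω → ℝ) (hYm : ∀ a, Measurable (Y a))
    (hind : iIndepFun Y μ)
    (hid : ∀ a, IdentDistrib (Y a) ξ μ μ) (hmeas : Measurable ξ)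
    (h4 : Integrable (fun ω => (ξ ω) ^ 4) μ)
    (e : I → ℕ) (he : ∀ a, e a ≤ 4) (s : Finset I) :
    Integrable (fun ω => ∏ a ∈ s, Y a ω ^ e a) μ ∧
      ∫ ω, ∏ a ∈ s, Y a ω ^ e a ∂μ = ∏ a ∈ s, ∫ ω, ξ ω ^ e a ∂μ := by
  classical
  have hxi := auxT_xi_int (μ := μ) hmeas h4
  set f : I → Ω → ℝ := fun a ω => Y a ω ^ e a with hf
  have hfm : ∀ a, Measurable (f a) := fun a => (hYm a).pow_const _
  have hfind : iIndepFun f μ :=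
    hind.comp (fun a x => x ^ e a) (fun a => measurable_id.pow_const _)
  have hfid : ∀ a, IdentDistrib (f a) (fun ω => ξ ω ^ e a) μ μ := fun a =>
    (hid a).comp (show Measurable (fun x : ℝ => x ^ e a) from measurable_id.pow_const _)
  have hfint : ∀ a, Integrable (f a) μ := fun a =>
    ((hfid a).integrable_iff).2 (hxi _ (he a))
  have key : ∀ s : Finset I, Integrable (∏ a ∈ s, f a) μ ∧
      integral μ (∏ a ∈ s, f a) = ∏ a ∈ s, ∫ ω, ξ ω ^ e a ∂μ := by
    intro s
    induction s using Finset.induction_on with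
    | empty => simp [Pi.one_def]
    | @insert a s ha ih =>
      have hindep : IndepFun (f a) (∏ j ∈ s, f j) μ :=
        (hfind.indepFun_finsetProd_of_notMem hfm ha).symm
      rw [Finset.prod_insert ha, Finset.prod_insert ha]
      refine ⟨hindep.integrable_mul (hfint a) ih.1, ?_⟩
      rw [hindep.integral_mul_eq_mul_integral (hfint a).1 ih.1.1, ih.2, (hfid a).integral_eq]
  have hrw : (fun ω => ∏ a ∈ s, Y a ω ^ e a) = ∏ a ∈ s, f a := by
    funext ω; simp [hf]
  rw [hrw]
  exact ⟨(key s).1, by rw [show (∫ ω, (∏ a ∈ s, f a) ω ∂μ) = integral μ (∏ a ∈ s, f a) from rfl, (key s).2]⟩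

end AuxTight


section AuxTight2
variable {Ω : Type*} [MeasurableSpace Ω] {μ : Measure Ω} [IsProbabilityMeasure μ]
variable {ξ : Ω → ℝ} {I : Type*} [DecidableEq I] {Y : I → Ω → ℝ}
variable (hYm : ∀ a, Measurable (Y a))
    (hind : iIndepFun Y μ)
    (hid : ∀ a, IdentDistrib (Y a) ξ μ μ) (hmeas : Measurable ξ)
    (h4 : Integrable (fun ω => (ξ ω) ^ 4) μ)

include hYm hind hid hmeas h4

lemma auxT_int1 (a : I) (k : ℕ) (hk : k ≤ 4) :
    Integrable (fun ω => Y a ω ^ k) μ ∧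
      ∫ ω, Y a ω ^ k ∂μ = ∫ ω, ξ ω ^ k ∂μ := by
  have h := auxT_prod Y hYm hind hid hmeas h4 (fun _ => k) (fun _ => hk) {a}
  simpa using h

lemma auxT_int2 {a b : I} (hab : a ≠ b) (k l : ℕ) (hk : k ≤ 4) (hl : l ≤ 4) :
    Integrable (fun ω => Y a ω ^ k * Y b ω ^ l) μ ∧
      ∫ ω, Y a ω ^ k * Y b ω ^ l ∂μ = (∫ ω, ξ ω ^ k ∂μ) * ∫ ω, ξ ω ^ l ∂μ := by
  have h := auxT_prod Y hYm hind hid hmeas h4 (fun x => if x = a then k else l)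
    (fun x => by split_ifs <;> assumption) {a, b}
  simp only [Finset.prod_pair hab] at h
  simp only [if_pos, if_neg hab.symm] at h
  simpa using h

lemma auxT_int3 {a b c : I} (hab : a ≠ b) (hac : a ≠ c) (hbc : b ≠ c)
    (j k l : ℕ) (hj : j ≤ 4) (hk : k ≤ 4) (hl : l ≤ 4) :
    Integrable (fun ω => Y a ω ^ j * (Y b ω ^ k * Y c ω ^ l)) μ ∧
      ∫ ω, Y a ω ^ j * (Y b ω ^ k * Y c ω ^ l) ∂μ
        = (∫ ω, ξ ω ^ j ∂μ) * ((∫ ω, ξ ω ^ k ∂μ) * ∫ ω, ξ ω ^ l ∂μ) := by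
  have h := auxT_prod Y hYm hind hid hmeas h4
    (fun x => if x = a then j else if x = b then k else l)
    (fun x => by split_ifs <;> assumption) {a, b, c}
  have hns : a ∉ ({b, c} : Finset I) := by simp [hab, hac]
  have hns2 : b ∉ ({c} : Finset I) := by simp [hbc]
  simp only [show ({a, b, c} : Finset I) = insert a (insert b {c}) from rfl,
    Finset.prod_insert hns, Finset.prod_insert hns2, Finset.prod_singleton,
    if_pos rfl, if_neg hab.symm, if_neg hac.symm, if_neg hbc.symm] at h
  exact h

lemma auxT_int4 {a b c d : I} (hab : a ≠ b) (hac : a ≠ c) (had : a ≠ d)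
    (hbc : b ≠ c) (hbd : b ≠ d) (hcd : c ≠ d) :
    Integrable (fun ω => Y a ω * (Y b ω * (Y c ω * Y d ω))) μ ∧
      ∫ ω, Y a ω * (Y b ω * (Y c ω * Y d ω)) ∂μ
        = (∫ ω, ξ ω ∂μ) * ((∫ ω, ξ ω ∂μ) * ((∫ ω, ξ ω ∂μ) * ∫ ω, ξ ω ∂μ)) := by
  have h := auxT_prod Y hYm hind hid hmeas h4 (fun _ => 1) (fun _ => by norm_num)
    {a, b, c, d}
  have h1 : a ∉ ({b, c, d} : Finset I) := by simp [hab, hac, had]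
  have h2 : b ∉ ({c, d} : Finset I) := by simp [hbc, hbd]
  have h3 : c ∉ ({d} : Finset I) := by simp [hcd]
  simp only [show ({a, b, c, d} : Finset I) = insert a (insert b (insert c {d})) from rfl,
    Finset.prod_insert h1, Finset.prod_insert h2, Finset.prod_insert h3,
    Finset.prod_singleton, pow_one] at h
  exact h

end AuxTight2


section AuxTight3
variable {Ω : Type*} [MeasurableSpace Ω] {μ : Measure Ω} [IsProbabilityMeasure μ]
variable {ξ : Ω → ℝ} {I : Type*} [DecidableEq I] {Y : I → Ω → ℝ}
variable (hYm : ∀ a, Measurable (Y a))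
    (hind : iIndepFun Y μ)
    (hid : ∀ a, IdentDistrib (Y a) ξ μ μ) (hmeas : Measurable ξ)
    (h0 : (∫ ω, ξ ω ∂μ) = 0) (h1 : (∫ ω, (ξ ω) ^ 2 ∂μ) = 1)
    (h4 : Integrable (fun ω => (ξ ω) ^ 4) μ)

include hYm hind hid hmeas h0 h1 h4

set_option maxHeartbeats 1000000 in
lemma auxT_pair (a b c d : I) :
    Integrable (fun ω => (Y a ω * Y b ω - if a = b then (1:ℝ) else 0)
        * (Y c ω * Y d ω - if c = d then (1:ℝ) else 0)) μ ∧
      ∫ ω, (Y a ω * Y b ω - if a = b then (1:ℝ) else 0)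
        * (Y c ω * Y d ω - if c = d then (1:ℝ) else 0) ∂μ
      = (if a = b then (if c = a ∧ d = a then (∫ ω, ξ ω ^ 4 ∂μ) - 1 else 0)
          else if (c = a ∧ d = b) ∨ (c = b ∧ d = a) then (1:ℝ) else 0) := by
  have h0' : (∫ ω, ξ ω ^ 1 ∂μ) = 0 := by simpa using h0
  by_cases hab : a = b
  · subst hab
    by_cases hcd : c = d
    · subst hcd
      by_cases hca : c = a
      · subst hca
        have i4 := auxT_int1 hYm hind hid hmeas h4 c 4 (by norm_num)
        have i2 := auxT_int1 hYm hind hid hmeas h4 c 2 (by norm_num)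
        have hB : Integrable (fun ω => 2 * Y c ω ^ 2) μ := i2.1.const_mul 2
        have hA : Integrable (fun ω => Y c ω ^ 4 - 2 * Y c ω ^ 2) μ := i4.1.sub hB
        have hW : Integrable (fun ω => Y c ω ^ 4 - 2 * Y c ω ^ 2 + 1) μ :=
          hA.add (integrable_const 1)
        have hval : ∫ ω, (Y c ω ^ 4 - 2 * Y c ω ^ 2 + 1) ∂μ = (∫ ω, ξ ω ^ 4 ∂μ) - 1 := by
          rw [integral_add hA (integrable_const 1), integral_sub i4.1 hB,
            integral_const_mul, i4.2, i2.2, h1]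
          simp
          try ring
        refine ⟨hW.congr (Filter.Eventually.of_forall fun ω => ?_),
          (integral_congr_ae (Filter.Eventually.of_forall (fun ω => ?_))).trans (hval.trans ?_)⟩
        · split_ifs <;> first | ring1 | tauto
        · split_ifs <;> first | ring1 | tauto
        · split_ifs <;> first | ring1 | tauto
      · have hca' : c ≠ a := hca
        have i22 := auxT_int2 hYm hind hid hmeas h4 hca' 2 2 (by norm_num) (by norm_num)
        have ic := auxT_int1 hYm hind hid hmeas h4 c 2 (by norm_num)
        have ia := auxT_int1 hYm hind hid hmeas h4 a 2 (by norm_num)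
        have hA : Integrable (fun ω => Y c ω ^ 2 * Y a ω ^ 2 - Y c ω ^ 2) μ := i22.1.sub ic.1
        have hB : Integrable (fun ω => Y c ω ^ 2 * Y a ω ^ 2 - Y c ω ^ 2 - Y a ω ^ 2) μ :=
          hA.sub ia.1
        have hW : Integrable (fun ω => Y c ω ^ 2 * Y a ω ^ 2 - Y c ω ^ 2 - Y a ω ^ 2 + 1) μ :=
          hB.add (integrable_const 1)
        have hval : ∫ ω, (Y c ω ^ 2 * Y a ω ^ 2 - Y c ω ^ 2 - Y a ω ^ 2 + 1) ∂μ = 0 := by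
          rw [integral_add hB (integrable_const 1), integral_sub hA ia.1,
            integral_sub i22.1 ic.1, i22.2, ic.2, ia.2, h1]
          simp
          try ring
        refine ⟨hW.congr (Filter.Eventually.of_forall fun ω => ?_),
          (integral_congr_ae (Filter.Eventually.of_forall (fun ω => ?_))).trans (hval.trans ?_)⟩
        · split_ifs <;> first | ring1 | tauto
        · split_ifs <;> first | ring1 | tauto
        · split_ifs <;> first | ring1 | tauto
    · by_cases hca : c = a
      · subst hca
        have hcd' : c ≠ d := hcd
        have i31 := auxT_int2 hYm hind hid hmeas h4 hcd' 3 1 (by norm_num) (by norm_num)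
        have i11 := auxT_int2 hYm hind hid hmeas h4 hcd' 1 1 (by norm_num) (by norm_num)
        have hW : Integrable (fun ω => Y c ω ^ 3 * Y d ω ^ 1 - Y c ω ^ 1 * Y d ω ^ 1) μ :=
          i31.1.sub i11.1
        have hval : ∫ ω, (Y c ω ^ 3 * Y d ω ^ 1 - Y c ω ^ 1 * Y d ω ^ 1) ∂μ = 0 := by
          rw [integral_sub i31.1 i11.1, i31.2, i11.2, h0']; ring
        refine ⟨hW.congr (Filter.Eventually.of_forall fun ω => ?_),
          (integral_congr_ae (Filter.Eventually.of_forall (fun ω => ?_))).trans (hval.trans ?_)⟩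
        · split_ifs <;> first | ring1 | tauto
        · split_ifs <;> first | ring1 | tauto
        · split_ifs <;> first | ring1 | tauto
      · by_cases hda : d = a
        · subst hda
          have hdc : d ≠ c := fun h => hcd h.symm
          have i31 := auxT_int2 hYm hind hid hmeas h4 hdc 3 1 (by norm_num) (by norm_num)
          have i11 := auxT_int2 hYm hind hid hmeas h4 hdc 1 1 (by norm_num) (by norm_num)
          have hW : Integrable (fun ω => Y d ω ^ 3 * Y c ω ^ 1 - Y d ω ^ 1 * Y c ω ^ 1) μ :=
            i31.1.sub i11.1
          have hval : ∫ ω, (Y d ω ^ 3 * Y c ω ^ 1 - Y d ω ^ 1 * Y c ω ^ 1) ∂μ = 0 := by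
            rw [integral_sub i31.1 i11.1, i31.2, i11.2, h0']; ring
          refine ⟨hW.congr (Filter.Eventually.of_forall fun ω => ?_),
            (integral_congr_ae (Filter.Eventually.of_forall (fun ω => ?_))).trans (hval.trans ?_)⟩
          · split_ifs <;> first | ring1 | tauto
          · split_ifs <;> first | ring1 | tauto
          · split_ifs <;> first | ring1 | tauto
        · have hac : a ≠ c := fun h => hca h.symm
          have had : a ≠ d := fun h => hda h.symm
          have i3 := auxT_int3 hYm hind hid hmeas h4 hac had hcd 2 1 1
            (by norm_num) (by norm_num) (by norm_num)
          have i11 := auxT_int2 hYm hind hid hmeas h4 hcd 1 1 (by norm_num) (by norm_num)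
          have hW : Integrable
              (fun ω => Y a ω ^ 2 * (Y c ω ^ 1 * Y d ω ^ 1) - Y c ω ^ 1 * Y d ω ^ 1) μ :=
            i3.1.sub i11.1
          have hval : ∫ ω, (Y a ω ^ 2 * (Y c ω ^ 1 * Y d ω ^ 1) - Y c ω ^ 1 * Y d ω ^ 1) ∂μ
              = 0 := by
            rw [integral_sub i3.1 i11.1, i3.2, i11.2, h0']; ring
          refine ⟨hW.congr (Filter.Eventually.of_forall fun ω => ?_),
            (integral_congr_ae (Filter.Eventually.of_forall (fun ω => ?_))).trans (hval.trans ?_)⟩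
          · split_ifs <;> first | ring1 | tauto
          · split_ifs <;> first | ring1 | tauto
          · split_ifs <;> first | ring1 | tauto
  · by_cases hcd : c = d
    · subst hcd
      by_cases hca : c = a
      · subst hca
        have hab' : c ≠ b := hab
        have i31 := auxT_int2 hYm hind hid hmeas h4 hab' 3 1 (by norm_num) (by norm_num)
        have i11 := auxT_int2 hYm hind hid hmeas h4 hab' 1 1 (by norm_num) (by norm_num)
        have hW : Integrable (fun ω => Y c ω ^ 3 * Y b ω ^ 1 - Y c ω ^ 1 * Y b ω ^ 1) μ :=
          i31.1.sub i11.1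
        have hval : ∫ ω, (Y c ω ^ 3 * Y b ω ^ 1 - Y c ω ^ 1 * Y b ω ^ 1) ∂μ = 0 := by
          rw [integral_sub i31.1 i11.1, i31.2, i11.2, h0']; ring
        refine ⟨hW.congr (Filter.Eventually.of_forall fun ω => ?_),
          (integral_congr_ae (Filter.Eventually.of_forall (fun ω => ?_))).trans (hval.trans ?_)⟩
        · split_ifs <;> first | ring1 | tauto
        · split_ifs <;> first | ring1 | tauto
        · split_ifs <;> first | ring1 | tauto
      · by_cases hcb : c = b
        · subst hcb
          have hab' : a ≠ c := hab
          have i13 := auxT_int2 hYm hind hid hmeas h4 hab' 1 3 (by norm_num) (by norm_num)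
          have i11 := auxT_int2 hYm hind hid hmeas h4 hab' 1 1 (by norm_num) (by norm_num)
          have hW : Integrable (fun ω => Y a ω ^ 1 * Y c ω ^ 3 - Y a ω ^ 1 * Y c ω ^ 1) μ :=
            i13.1.sub i11.1
          have hval : ∫ ω, (Y a ω ^ 1 * Y c ω ^ 3 - Y a ω ^ 1 * Y c ω ^ 1) ∂μ = 0 := by
            rw [integral_sub i13.1 i11.1, i13.2, i11.2, h0']; ring
          refine ⟨hW.congr (Filter.Eventually.of_forall fun ω => ?_),
            (integral_congr_ae (Filter.Eventually.of_forall (fun ω => ?_))).trans (hval.trans ?_)⟩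
          · split_ifs <;> first | ring1 | tauto
          · split_ifs <;> first | ring1 | tauto
          · split_ifs <;> first | ring1 | tauto
        · have hac : a ≠ c := fun h => hca h.symm
          have hbc : b ≠ c := fun h => hcb h.symm
          have i3 := auxT_int3 hYm hind hid hmeas h4 hab hac hbc 1 1 2
            (by norm_num) (by norm_num) (by norm_num)
          have i11 := auxT_int2 hYm hind hid hmeas h4 hab 1 1 (by norm_num) (by norm_num)
          have hW : Integrable
              (fun ω => Y a ω ^ 1 * (Y b ω ^ 1 * Y c ω ^ 2) - Y a ω ^ 1 * Y b ω ^ 1) μ :=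
            i3.1.sub i11.1
          have hval : ∫ ω, (Y a ω ^ 1 * (Y b ω ^ 1 * Y c ω ^ 2) - Y a ω ^ 1 * Y b ω ^ 1) ∂μ
              = 0 := by
            rw [integral_sub i3.1 i11.1, i3.2, i11.2, h0']; ring
          refine ⟨hW.congr (Filter.Eventually.of_forall fun ω => ?_),
            (integral_congr_ae (Filter.Eventually.of_forall (fun ω => ?_))).trans (hval.trans ?_)⟩
          · split_ifs <;> first | ring1 | tauto
          · split_ifs <;> first | ring1 | tauto
          · split_ifs <;> first | ring1 | tauto
    · by_cases hca : c = a
      · subst hca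
        by_cases hdb : d = b
        · subst hdb
          have i22 := auxT_int2 hYm hind hid hmeas h4 hcd 2 2 (by norm_num) (by norm_num)
          have hW : Integrable (fun ω => Y c ω ^ 2 * Y d ω ^ 2) μ := i22.1
          have hval : ∫ ω, (Y c ω ^ 2 * Y d ω ^ 2) ∂μ = 1 := by
            rw [i22.2, h1]; norm_num
          refine ⟨hW.congr (Filter.Eventually.of_forall fun ω => ?_),
            (integral_congr_ae (Filter.Eventually.of_forall (fun ω => ?_))).trans (hval.trans ?_)⟩
          · split_ifs <;> first | ring1 | tauto
          · split_ifs <;> first | ring1 | tauto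
          · split_ifs <;> first | ring1 | tauto
        · have hcb : c ≠ b := hab
          have hbd : b ≠ d := fun h => hdb h.symm
          have i3 := auxT_int3 hYm hind hid hmeas h4 hcb hcd hbd 2 1 1
            (by norm_num) (by norm_num) (by norm_num)
          have hW : Integrable (fun ω => Y c ω ^ 2 * (Y b ω ^ 1 * Y d ω ^ 1)) μ := i3.1
          have hval : ∫ ω, (Y c ω ^ 2 * (Y b ω ^ 1 * Y d ω ^ 1)) ∂μ = 0 := by
            rw [i3.2, h0']; ring
          refine ⟨hW.congr (Filter.Eventually.of_forall fun ω => ?_),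
            (integral_congr_ae (Filter.Eventually.of_forall (fun ω => ?_))).trans (hval.trans ?_)⟩
          · split_ifs <;> first | ring1 | tauto
          · split_ifs <;> first | ring1 | tauto
          · split_ifs <;> first | ring1 | tauto
      · by_cases hcb : c = b
        · subst hcb
          by_cases hda : d = a
          · subst hda
            have hdc : d ≠ c := hab
            have i22 := auxT_int2 hYm hind hid hmeas h4 hdc 2 2 (by norm_num) (by norm_num)
            have hW : Integrable (fun ω => Y d ω ^ 2 * Y c ω ^ 2) μ := i22.1
            have hval : ∫ ω, (Y d ω ^ 2 * Y c ω ^ 2) ∂μ = 1 := by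
              rw [i22.2, h1]; norm_num
            refine ⟨hW.congr (Filter.Eventually.of_forall fun ω => ?_),
              (integral_congr_ae (Filter.Eventually.of_forall (fun ω => ?_))).trans (hval.trans ?_)⟩
            · split_ifs <;> first | ring1 | tauto
            · split_ifs <;> first | ring1 | tauto
            · split_ifs <;> first | ring1 | tauto
          · have had : a ≠ d := fun h => hda h.symm
            have i3 := auxT_int3 hYm hind hid hmeas h4 hab had hcd 1 2 1
              (by norm_num) (by norm_num) (by norm_num)
            have hW : Integrable (fun ω => Y a ω ^ 1 * (Y c ω ^ 2 * Y d ω ^ 1)) μ := i3.1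
            have hval : ∫ ω, (Y a ω ^ 1 * (Y c ω ^ 2 * Y d ω ^ 1)) ∂μ = 0 := by
              rw [i3.2, h0']; ring
            refine ⟨hW.congr (Filter.Eventually.of_forall fun ω => ?_),
              (integral_congr_ae (Filter.Eventually.of_forall (fun ω => ?_))).trans (hval.trans ?_)⟩
            · split_ifs <;> first | ring1 | tauto
            · split_ifs <;> first | ring1 | tauto
            · split_ifs <;> first | ring1 | tauto
        · by_cases hda : d = a
          · subst hda
            have hdb : d ≠ b := hab
            have hdc : d ≠ c := fun h => hca h.symm
            have hbc : b ≠ c := fun h => hcb h.symm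
            have i3 := auxT_int3 hYm hind hid hmeas h4 hdb hdc hbc 2 1 1
              (by norm_num) (by norm_num) (by norm_num)
            have hW : Integrable (fun ω => Y d ω ^ 2 * (Y b ω ^ 1 * Y c ω ^ 1)) μ := i3.1
            have hval : ∫ ω, (Y d ω ^ 2 * (Y b ω ^ 1 * Y c ω ^ 1)) ∂μ = 0 := by
              rw [i3.2, h0']; ring
            refine ⟨hW.congr (Filter.Eventually.of_forall fun ω => ?_),
              (integral_congr_ae (Filter.Eventually.of_forall (fun ω => ?_))).trans (hval.trans ?_)⟩
            · split_ifs <;> first | ring1 | tauto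
            · split_ifs <;> first | ring1 | tauto
            · split_ifs <;> first | ring1 | tauto
          · by_cases hdb : d = b
            · subst hdb
              have had : a ≠ d := hab
              have hac : a ≠ c := fun h => hca h.symm
              have hdc : d ≠ c := fun h => hcd h.symm
              have i3 := auxT_int3 hYm hind hid hmeas h4 had hac hdc 1 2 1
                (by norm_num) (by norm_num) (by norm_num)
              have hW : Integrable (fun ω => Y a ω ^ 1 * (Y d ω ^ 2 * Y c ω ^ 1)) μ := i3.1
              have hval : ∫ ω, (Y a ω ^ 1 * (Y d ω ^ 2 * Y c ω ^ 1)) ∂μ = 0 := by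
                rw [i3.2, h0']; ring
              refine ⟨hW.congr (Filter.Eventually.of_forall fun ω => ?_),
                (integral_congr_ae (Filter.Eventually.of_forall (fun ω => ?_))).trans (hval.trans ?_)⟩
              · split_ifs <;> first | ring1 | tauto
              · split_ifs <;> first | ring1 | tauto
              · split_ifs <;> first | ring1 | tauto
            · have hac : a ≠ c := fun h => hca h.symm
              have had : a ≠ d := fun h => hda h.symm
              have hbc : b ≠ c := fun h => hcb h.symm
              have hbd : b ≠ d := fun h => hdb h.symm
              have i4 := auxT_int4 hYm hind hid hmeas h4 hab hac had hbc hbd hcd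
              have hW : Integrable (fun ω => Y a ω * (Y b ω * (Y c ω * Y d ω))) μ := i4.1
              have hval : ∫ ω, (Y a ω * (Y b ω * (Y c ω * Y d ω))) ∂μ = 0 := by
                rw [i4.2, h0]; ring
              refine ⟨hW.congr (Filter.Eventually.of_forall fun ω => ?_),
                (integral_congr_ae (Filter.Eventually.of_forall (fun ω => ?_))).trans (hval.trans ?_)⟩
              · split_ifs <;> first | ring1 | tauto
              · split_ifs <;> first | ring1 | tauto
              · split_ifs <;> first | ring1 | tauto

end AuxTight3


section AuxTight4
variable {Ω : Type*} [MeasurableSpace Ω] {μ : Measure Ω} [IsProbabilityMeasure μ]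
variable {ξ : Ω → ℝ} {I : Type*} [DecidableEq I] {Y : I → Ω → ℝ}
variable (hYm : ∀ a, Measurable (Y a))
    (hind : iIndepFun Y μ)
    (hid : ∀ a, IdentDistrib (Y a) ξ μ μ) (hmeas : Measurable ξ)
    (h0 : (∫ ω, ξ ω ∂μ) = 0) (h1 : (∫ ω, (ξ ω) ^ 2 ∂μ) = 1)
    (h4 : Integrable (fun ω => (ξ ω) ^ 4) μ)

include hYm hind hid hmeas h0 h1 h4

set_option maxHeartbeats 1000000 in
lemma auxT_var [Fintype I] {P : Type*} [Fintype P] (c : P → I → ℝ) :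
    Integrable (fun ω => ((∑ i, (∑ a, c i a * Y a ω) ^ 2) - ∑ i, ∑ a, (c i a) ^ 2) ^ 2) μ ∧
      ∫ ω, ((∑ i, (∑ a, c i a * Y a ω) ^ 2) - ∑ i, ∑ a, (c i a) ^ 2) ^ 2 ∂μ
        ≤ ((∫ ω, ξ ω ^ 4 ∂μ) + 1) * ∑ i, ∑ i', (∑ a, c i a * c i' a) ^ 2 := by
  classical
  set m4 := ∫ ω, ξ ω ^ 4 ∂μ with hm4
  have hI2 : Integrable (fun ω => ξ ω ^ 2) μ := auxT_xi_int hmeas h4 2 (by norm_num)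
  have hm41 : 1 ≤ m4 := by
    have hnn : 0 ≤ ∫ ω, (ξ ω ^ 2 - 1) ^ 2 ∂μ := integral_nonneg fun ω => sq_nonneg _
    have hexp : (fun ω => (ξ ω ^ 2 - 1) ^ 2) = fun ω => ξ ω ^ 4 - 2 * ξ ω ^ 2 + 1 := by
      funext ω; ring
    have hBI : Integrable (fun ω => 2 * ξ ω ^ 2) μ := hI2.const_mul 2
    have hAI : Integrable (fun ω => ξ ω ^ 4 - 2 * ξ ω ^ 2) μ := h4.sub hBI
    rw [hexp, integral_add hAI (integrable_const 1), integral_sub h4 hBI,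
      integral_const_mul, h1] at hnn
    simp at hnn
    linarith
  set M : I × I → ℝ := fun q => ∑ i, c i q.1 * c i q.2 with hM
  have hMsymm : ∀ a b : I, M (a, b) = M (b, a) := fun a b =>
    Finset.sum_congr rfl fun i _ => mul_comm _ _
  set Z : I × I → Ω → ℝ := fun q ω =>
    Y q.1 ω * Y q.2 ω - if q.1 = q.2 then (1:ℝ) else 0 with hZ
  set K : I × I → I × I → ℝ := fun q r =>
    if q.1 = q.2 then (if r.1 = q.1 ∧ r.2 = q.1 then m4 - 1 else 0)
    else if (r.1 = q.1 ∧ r.2 = q.2) ∨ (r.1 = q.2 ∧ r.2 = q.1) then (1:ℝ) else 0 with hK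
  have hpair : ∀ q r : I × I, Integrable (fun ω => Z q ω * Z r ω) μ ∧
      ∫ ω, Z q ω * Z r ω ∂μ = K q r := fun q r =>
    auxT_pair hYm hind hid hmeas h0 h1 h4 q.1 q.2 r.1 r.2
  -- pointwise identity for the centered statistic
  have hS : ∀ ω, ((∑ i, (∑ a, c i a * Y a ω) ^ 2) - ∑ i, ∑ a, (c i a) ^ 2)
      = ∑ q : I × I, M q * Z q ω := by
    intro ω
    have e1 : (∑ i, (∑ a, c i a * Y a ω) ^ 2)
        = ∑ q : I × I, M q * (Y q.1 ω * Y q.2 ω) := by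
      have e0 : ∀ i, (∑ a, c i a * Y a ω) ^ 2
          = ∑ a, ∑ b, c i a * c i b * (Y a ω * Y b ω) := by
        intro i
        rw [sq, Finset.sum_mul_sum]
        exact Finset.sum_congr rfl fun a _ => Finset.sum_congr rfl fun b _ => by ring
      simp only [e0]
      rw [Fintype.sum_prod_type, Finset.sum_comm]
      refine Finset.sum_congr rfl fun a _ => ?_
      rw [Finset.sum_comm]
      refine Finset.sum_congr rfl fun b _ => ?_
      simp only [hM]
      rw [Finset.sum_mul]
    have e2 : (∑ i, ∑ a, (c i a) ^ 2)
        = ∑ q : I × I, M q * (if q.1 = q.2 then (1:ℝ) else 0) := by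
      rw [Fintype.sum_prod_type]
      simp only [mul_ite, mul_one, mul_zero, Finset.sum_ite_eq, Finset.mem_univ, if_true]
      rw [Finset.sum_comm]
      refine Finset.sum_congr rfl fun i _ => Finset.sum_congr rfl fun a _ => by
        simp [hM, sq]
    rw [e1, e2, ← Finset.sum_sub_distrib]
    exact Finset.sum_congr rfl fun q _ => by simp only [hZ]; ring
  have hQT : (fun ω => ((∑ i, (∑ a, c i a * Y a ω) ^ 2) - ∑ i, ∑ a, (c i a) ^ 2) ^ 2)
      = fun ω => ∑ q : I × I, ∑ r : I × I, (M q * M r) * (Z q ω * Z r ω) := by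
    funext ω
    rw [hS ω, sq, Finset.sum_mul_sum]
    exact Finset.sum_congr rfl fun q _ => Finset.sum_congr rfl fun r _ => by ring
  have hint : ∀ q r : I × I, Integrable (fun ω => (M q * M r) * (Z q ω * Z r ω)) μ :=
    fun q r => (hpair q r).1.const_mul _
  have hIint : Integrable (fun ω => ∑ q : I × I, ∑ r : I × I, (M q * M r) * (Z q ω * Z r ω)) μ :=
    integrable_finset_sum _ fun q _ => integrable_finset_sum _ fun r _ => hint q r
  rw [hQT]
  refine ⟨hIint, ?_⟩
  rw [integral_finset_sum _ fun q _ => integrable_finset_sum _ fun r _ => hint q r]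
  have hval : ∀ q : I × I, ∫ ω, (∑ r : I × I, (M q * M r) * (Z q ω * Z r ω)) ∂μ
      = ∑ r : I × I, (M q * M r) * K q r := by
    intro q
    rw [integral_finset_sum _ fun r _ => hint q r]
    exact Finset.sum_congr rfl fun r _ => by rw [integral_const_mul, (hpair q r).2]
  rw [Finset.sum_congr rfl fun q _ => hval q]
  -- bound the inner sums
  have hsum : ∀ q : I × I, (∑ r : I × I, (M q * M r) * K q r) ≤ (m4 + 1) * M q ^ 2 := by
    intro q
    by_cases hq : q.1 = q.2
    · have hterm : ∀ r : I × I, (M q * M r) * K q r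
          = if r = (q.1, q.1) then (M q * M r) * (m4 - 1) else 0 := by
        intro r
        simp only [hK, if_pos hq]
        by_cases hr : r = (q.1, q.1)
        · subst hr; simp
        · rw [if_neg, if_neg hr, mul_zero]
          rintro ⟨h1', h2'⟩
          exact hr (Prod.ext h1' h2')
      rw [Finset.sum_congr rfl fun r _ => hterm r, Finset.sum_ite_eq' Finset.univ]
      have hqe : ((q.1, q.1) : I × I) = q := by
        have := Prod.mk.eta (p := q); rw [← this, hq]
      simp only [Finset.mem_univ, if_true, hqe]
      nlinarith [sq_nonneg (M q)]
    · have hterm : ∀ r : I × I, (M q * M r) * K q r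
          = (if r = q then M q * M r else 0) + (if r = (q.2, q.1) then M q * M r else 0) := by
        intro r
        simp only [hK, if_neg hq]
        by_cases hr1 : r = q
        · subst hr1
          have hne : ¬(r = (r.2, r.1)) := fun hcon => hq (congrArg Prod.fst hcon)
          rw [if_pos (Or.inl ⟨rfl, rfl⟩), if_pos rfl, if_neg hne, mul_one, add_zero]
        · by_cases hr2 : r = (q.2, q.1)
          · subst hr2
            rw [if_pos (Or.inr ⟨rfl, rfl⟩), if_neg hr1, if_pos rfl, mul_one, zero_add]
          · have hne : ¬((r.1 = q.1 ∧ r.2 = q.2) ∨ (r.1 = q.2 ∧ r.2 = q.1)) := by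
              rintro (⟨h1', h2'⟩ | ⟨h1', h2'⟩)
              · exact hr1 (Prod.ext h1' h2')
              · exact hr2 (Prod.ext h1' h2')
            rw [if_neg hne, if_neg hr1, if_neg hr2, mul_zero, add_zero]
      rw [Finset.sum_congr rfl fun r _ => hterm r, Finset.sum_add_distrib,
        Finset.sum_ite_eq' Finset.univ, Finset.sum_ite_eq' Finset.univ]
      have hqe : M (q.2, q.1) = M q := by
        rw [hMsymm]
      simp only [Finset.mem_univ, if_true, hqe]
      nlinarith [sq_nonneg (M q)]
  calc (∑ q : I × I, ∑ r : I × I, (M q * M r) * K q r)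
      ≤ ∑ q : I × I, (m4 + 1) * M q ^ 2 := Finset.sum_le_sum fun q _ => hsum q
    _ = (m4 + 1) * ∑ q : I × I, M q ^ 2 := by rw [Finset.mul_sum]
    _ = (m4 + 1) * ∑ i, ∑ i', (∑ a, c i a * c i' a) ^ 2 := by
      refine congrArg (fun t => (m4 + 1) * t) ?_
      have e3 : ∀ q : I × I, M q ^ 2
          = ∑ w : P × P, (c w.1 q.1 * c w.2 q.1) * (c w.1 q.2 * c w.2 q.2) := by
        intro q
        rw [Fintype.sum_prod_type, sq]
        simp only [hM]
        rw [Finset.sum_mul_sum]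
        exact Finset.sum_congr rfl fun i _ => Finset.sum_congr rfl fun i' _ => by ring
      rw [Finset.sum_congr rfl fun q _ => e3 q, Finset.sum_comm, Fintype.sum_prod_type]
      refine Finset.sum_congr rfl fun i _ => Finset.sum_congr rfl fun i' _ => ?_
      rw [sq, Finset.sum_mul_sum, Fintype.sum_prod_type]

end AuxTight4


set_option maxHeartbeats 1000000 in
/-- Under (A.1)–(A.3), `‖Bx̄‖² − c_n = O_P(√p/n)`: the sequence
`(n/√p)(‖Bx̄‖² − c_n)` is tight. -/
theorem projected_sample_mean_norm_tight
    {Ω : Type*} [MeasurableSpace Ω] (μ : Measure Ω) [IsProbabilityMeasure μ]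
    (ξ : Ω → ℝ) (hmeas : Measurable ξ)
    (h0 : (∫ ω, ξ ω ∂μ) = 0) (h1 : (∫ ω, (ξ ω) ^ 2 ∂μ) = 1)
    (h4 : Integrable (fun ω => (ξ ω) ^ 4) μ)
    (p m : ℕ → ℕ) (η : ℝ) (hη0 : 0 < η) (hη1 : η < 1)
    (hc : (fun n => (p n : ℝ) / n) =O[atTop] (fun n => (n : ℝ) ^ (-η)))
    (hp : Tendsto p atTop atTop)
    (B : ∀ n, Matrix (Fin (p n)) (Fin (m n)) ℝ)
    (hB : ∀ n, B n * (B n)ᵀ = 1)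
    (X : ∀ n, Fin (m n) × Fin n → Ω → ℝ)
    (hXmeas : ∀ n ij, Measurable (X n ij))
    (hXindep : ∀ n, iIndepFun (X n) μ)
    (hXident : ∀ n ij, IdentDistrib (X n ij) ξ μ μ) :
    ∀ ε > (0 : ℝ), ∃ C > (0 : ℝ), ∀ᶠ n in atTop,
      (μ {ω | C * (Real.sqrt (p n) / n) ≤
          |(∑ i, ((B n).mulVec
              (fun l => (n : ℝ)⁻¹ * ∑ j : Fin n, X n (l, j) ω) i) ^ 2)
            - (p n : ℝ) / n|}).toReal ≤ ε := by
  intro ε hε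
  set m4 := ∫ ω, ξ ω ^ 4 ∂μ with hm4d
  have hI2 : Integrable (fun ω => ξ ω ^ 2) μ := auxT_xi_int hmeas h4 2 (by norm_num)
  have hm41 : (1:ℝ) ≤ m4 := by
    have hnn : 0 ≤ ∫ ω, (ξ ω ^ 2 - 1) ^ 2 ∂μ := integral_nonneg fun ω => sq_nonneg _
    have hexp : (fun ω => (ξ ω ^ 2 - 1) ^ 2) = fun ω => ξ ω ^ 4 - 2 * ξ ω ^ 2 + 1 := by
      funext ω; ring
    have hBI : Integrable (fun ω => 2 * ξ ω ^ 2) μ := hI2.const_mul 2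
    have hAI : Integrable (fun ω => ξ ω ^ 4 - 2 * ξ ω ^ 2) μ := h4.sub hBI
    rw [hexp, integral_add hAI (integrable_const 1), integral_sub h4 hBI,
      integral_const_mul, h1] at hnn
    simp at hnn
    linarith
  set C := max 1 (Real.sqrt ((m4 + 1) / ε)) with hCdef
  have hC0 : (0:ℝ) < C := lt_of_lt_of_le one_pos (le_max_left _ _)
  have hCsq : (m4 + 1) / ε ≤ C ^ 2 := by
    rw [hCdef]
    have hx : (0:ℝ) ≤ (m4 + 1) / ε := div_nonneg (by linarith) hε.le
    nlinarith [Real.sq_sqrt hx, Real.sqrt_nonneg ((m4 + 1) / ε),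
      le_max_right (1:ℝ) (Real.sqrt ((m4 + 1) / ε)), le_max_left (1:ℝ) (Real.sqrt ((m4 + 1) / ε))]
  refine ⟨C, hC0, ?_⟩
  filter_upwards [hp.eventually_ge_atTop 1, Filter.eventually_ge_atTop 1] with n hpn hn1
  have hn0 : (0:ℝ) < (n:ℝ) := by exact_mod_cast hn1
  have hpn0 : (0:ℝ) < (p n : ℝ) := by exact_mod_cast hpn
  set cc : Fin (p n) → (Fin (m n) × Fin n) → ℝ := fun i a => B n i a.1 * (n:ℝ)⁻¹ with hccdef
  have hvar := auxT_var (hXmeas n) (hXindep n) (hXident n) hmeas h0 h1 h4 cc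
  have hBij : ∀ i i' : Fin (p n), (∑ l, B n i l * B n i' l) = if i = i' then (1:ℝ) else 0 := by
    intro i i'
    have hcongr := congrFun (congrFun (hB n) i) i'
    simpa [Matrix.mul_apply, Matrix.one_apply, Matrix.transpose_apply] using hcongr
  have hrow : ∀ i i' : Fin (p n), (∑ a : Fin (m n) × Fin n, cc i a * cc i' a)
      = (if i = i' then (1:ℝ) else 0) * (n:ℝ)⁻¹ := by
    intro i i'
    rw [Fintype.sum_prod_type]
    calc ∑ l, ∑ _j : Fin n, (B n i l * (n:ℝ)⁻¹) * (B n i' l * (n:ℝ)⁻¹)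
        = ∑ l, (B n i l * B n i' l) * (n:ℝ)⁻¹ := by
          refine Finset.sum_congr rfl fun l _ => ?_
          rw [Finset.sum_const, Finset.card_univ, Fintype.card_fin, nsmul_eq_mul]
          field_simp
      _ = (∑ l, B n i l * B n i' l) * (n:ℝ)⁻¹ := by rw [Finset.sum_mul]
      _ = _ := by rw [hBij i i']
  have hT : (∑ i, ∑ a : Fin (m n) × Fin n, (cc i a) ^ 2) = (p n : ℝ) / n := by
    have hTi : ∀ i : Fin (p n), (∑ a : Fin (m n) × Fin n, (cc i a) ^ 2) = (n:ℝ)⁻¹ := by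
      intro i
      have := hrow i i
      rw [if_pos rfl, one_mul] at this
      rw [← this]
      exact Finset.sum_congr rfl fun a _ => by rw [sq]
    rw [Finset.sum_congr rfl fun i _ => hTi i, Finset.sum_const, Finset.card_univ,
      Fintype.card_fin, nsmul_eq_mul, div_eq_mul_inv]
  have hG : (∑ i, ∑ i', (∑ a : Fin (m n) × Fin n, cc i a * cc i' a) ^ 2)
      = (p n : ℝ) / (n:ℝ) ^ 2 := by
    rw [Finset.sum_congr rfl fun i _ => Finset.sum_congr rfl fun i' _ =>
      congrArg (· ^ 2) (hrow i i')]
    have hinner : ∀ i : Fin (p n),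
        (∑ i', ((if i = i' then (1:ℝ) else 0) * (n:ℝ)⁻¹) ^ 2) = ((n:ℝ)⁻¹) ^ 2 := by
      intro i
      have : ∀ i' : Fin (p n), ((if i = i' then (1:ℝ) else 0) * (n:ℝ)⁻¹) ^ 2
          = if i = i' then ((n:ℝ)⁻¹) ^ 2 else 0 := by
        intro i'; split_ifs <;> ring
      rw [Finset.sum_congr rfl fun i' _ => this i', Finset.sum_ite_eq, if_pos (Finset.mem_univ i)]
    rw [Finset.sum_congr rfl fun i _ => hinner i, Finset.sum_const, Finset.card_univ,
      Fintype.card_fin, nsmul_eq_mul]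
    field_simp
  have hQ : ∀ ω, (∑ i, ((B n).mulVec
        (fun l => (n : ℝ)⁻¹ * ∑ j : Fin n, X n (l, j) ω) i) ^ 2)
      = ∑ i, (∑ a : Fin (m n) × Fin n, cc i a * X n a ω) ^ 2 := by
    intro ω
    refine Finset.sum_congr rfl fun i _ => ?_
    congr 1
    calc (B n).mulVec (fun l => (n : ℝ)⁻¹ * ∑ j : Fin n, X n (l, j) ω) i
        = ∑ l, B n i l * ((n:ℝ)⁻¹ * ∑ j : Fin n, X n (l, j) ω) := by
          simp [Matrix.mulVec, dotProduct]
      _ = ∑ l, ∑ j : Fin n, (B n i l * (n:ℝ)⁻¹) * X n (l, j) ω := by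
          simp only [Finset.mul_sum, mul_assoc]
      _ = ∑ a : Fin (m n) × Fin n, cc i a * X n a ω := by
          rw [Fintype.sum_prod_type]
  have hFeq : ∀ ω, ((∑ i, (∑ a : Fin (m n) × Fin n, cc i a * X n a ω) ^ 2)
        - ∑ i, ∑ a : Fin (m n) × Fin n, (cc i a) ^ 2)
      = (∑ i, ((B n).mulVec (fun l => (n : ℝ)⁻¹ * ∑ j : Fin n, X n (l, j) ω) i) ^ 2)
          - (p n : ℝ) / n := by
    intro ω
    rw [hQ ω, hT]
  set t := C * (Real.sqrt (p n) / n) with htdef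
  have ht0 : (0:ℝ) < t := mul_pos hC0 (div_pos (Real.sqrt_pos.2 hpn0) hn0)
  have ht2 : t ^ 2 = C ^ 2 * ((p n : ℝ) / (n:ℝ) ^ 2) := by
    rw [htdef, mul_pow, div_pow, Real.sq_sqrt hpn0.le]
  have hmarkov := mul_meas_ge_le_integral_of_nonneg (μ := μ)
    (f := fun ω => ((∑ i, (∑ a : Fin (m n) × Fin n, cc i a * X n a ω) ^ 2)
        - ∑ i, ∑ a : Fin (m n) × Fin n, (cc i a) ^ 2) ^ 2)
    (Filter.Eventually.of_forall fun ω => sq_nonneg _) hvar.1 (t ^ 2)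
  have hsub : {ω | t ≤ |(∑ i, ((B n).mulVec
          (fun l => (n : ℝ)⁻¹ * ∑ j : Fin n, X n (l, j) ω) i) ^ 2) - (p n : ℝ) / n|}
      ⊆ {ω | t ^ 2 ≤ ((∑ i, (∑ a : Fin (m n) × Fin n, cc i a * X n a ω) ^ 2)
          - ∑ i, ∑ a : Fin (m n) × Fin n, (cc i a) ^ 2) ^ 2} := by
    intro ω hω
    simp only [Set.mem_setOf_eq] at hω ⊢
    refine le_trans (pow_le_pow_left₀ ht0.le hω 2) ?_
    rw [sq_abs, ← hFeq ω]
  have hmono : (μ {ω | t ≤ |(∑ i, ((B n).mulVec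
          (fun l => (n : ℝ)⁻¹ * ∑ j : Fin n, X n (l, j) ω) i) ^ 2) - (p n : ℝ) / n|}).toReal
      ≤ (μ {ω | t ^ 2 ≤ ((∑ i, (∑ a : Fin (m n) × Fin n, cc i a * X n a ω) ^ 2)
          - ∑ i, ∑ a : Fin (m n) × Fin n, (cc i a) ^ 2) ^ 2}).toReal :=
    ENNReal.toReal_mono (measure_ne_top μ _) (measure_mono hsub)
  have ht2pos : (0:ℝ) < t ^ 2 := pow_pos ht0 2
  have hb1 : (μ {ω | t ^ 2 ≤ ((∑ i, (∑ a : Fin (m n) × Fin n, cc i a * X n a ω) ^ 2)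
          - ∑ i, ∑ a : Fin (m n) × Fin n, (cc i a) ^ 2) ^ 2}).toReal
      ≤ (∫ ω, ((∑ i, (∑ a : Fin (m n) × Fin n, cc i a * X n a ω) ^ 2)
          - ∑ i, ∑ a : Fin (m n) × Fin n, (cc i a) ^ 2) ^ 2 ∂μ) / t ^ 2 := by
    rw [le_div_iff₀ ht2pos]
    calc _ = t ^ 2 * (μ _).toReal := mul_comm _ _
      _ ≤ _ := hmarkov
  have hb2 : (∫ ω, ((∑ i, (∑ a : Fin (m n) × Fin n, cc i a * X n a ω) ^ 2)
          - ∑ i, ∑ a : Fin (m n) × Fin n, (cc i a) ^ 2) ^ 2 ∂μ) / t ^ 2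
      ≤ ((m4 + 1) * ((p n : ℝ) / (n:ℝ) ^ 2)) / t ^ 2 := by
    have hnum := hvar.2
    rw [hG] at hnum
    exact (div_le_div_iff_of_pos_right ht2pos).mpr hnum
  have hfinal : ((m4 + 1) * ((p n : ℝ) / (n:ℝ) ^ 2)) / t ^ 2 ≤ ε := by
    have hq : (0:ℝ) < (p n : ℝ) / (n:ℝ) ^ 2 := by positivity
    rw [ht2, div_le_iff₀ (by positivity)]
    have h1' : m4 + 1 ≤ ε * C ^ 2 := by
      rw [div_le_iff₀ hε] at hCsq
      linarith
    nlinarith [hq]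
  exact le_trans hmono (le_trans hb1 (le_trans hb2 hfinal))
end
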